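/- Let p be a prime and n a positive integer with gcd(p, 2n) = 1, and let D_n denote the dihedral group of order 2n. Then for every multiplicative Lie algebra structure ⋆̃ on G = ℤ_p × D_n there exists a multiplicative Lie algebra structure ⋆ on D_n such that (h,x) ⋆̃ (k,y) = (0, x ⋆ y) for all (h,x), (k,y) ∈ G. -/

import Mathlib

/-- A multiplicative Lie algebra structure on a group `G`. -/
def IsMulLieAlgebra {G : Type*} [Group G] (star : G → G → G) : Prop :=
  (∀ x, star x x = 1) ∧
  (∀ x y z, star x (y * z) = star x y * (y * star x z * y⁻¹)) ∧
  (∀ x y z, star (x * y) z = (x * star y z * x⁻¹) * star x z) ∧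
  (∀ x y z,
    star (star x y) (y * z * y⁻¹) * star (star y z) (z * x * z⁻¹) *
      star (star z x) (x * y * x⁻¹) = 1) ∧
  (∀ x y z, z * star x y * z⁻¹ = star (z * x * z⁻¹) (z * y * z⁻¹))

section Aux
variable {G : Type*} [Group G] {star : G → G → G}

lemma aux_star_one_right (hs : IsMulLieAlgebra star) (x) : star x 1 = 1 := by
  have h := hs.2.1 x 1 1
  simp only [mul_one, one_mul, inv_one] at h
  exact (left_eq_mul.mp h)

lemma aux_star_one_left (hs : IsMulLieAlgebra star) (z) : star 1 z = 1 := by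
  have h := hs.2.2.1 1 1 z
  simp only [mul_one, one_mul, inv_one] at h
  exact (right_eq_mul.mp h)

lemma aux_pow_left (hs : IsMulLieAlgebra star) (a z)
    (ha : ∀ g, a * g = g * a) : ∀ k : ℕ, star (a ^ k) z = (star a z) ^ k := by
  intro k
  induction k with
  | zero => simpa using aux_star_one_left hs z
  | succ k ih =>
    have h := hs.2.2.1 a (a ^ k) z
    rw [← pow_succ'] at h
    rw [h, ha (star (a ^ k) z), mul_inv_cancel_right, ih, ← pow_succ]

lemma aux_pow_right (hs : IsMulLieAlgebra star) (x a)
    (ha : ∀ g, a * g = g * a) : ∀ k : ℕ, star x (a ^ k) = (star x a) ^ k := by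
  intro k
  induction k with
  | zero => simpa using aux_star_one_right hs x
  | succ k ih =>
    have h := hs.2.1 x a (a ^ k)
    rw [← pow_succ'] at h
    rw [h, ha (star x (a ^ k)), mul_inv_cancel_right, ih, ← pow_succ']

lemma aux_pow_left' (hs : IsMulLieAlgebra star) (z a)
    (hc : ∀ w g, star w a * g = g * star w a) :
    ∀ k : ℕ, star (z ^ k) a = (star z a) ^ k := by
  intro k
  induction k with
  | zero => simpa using aux_star_one_left hs a
  | succ k ih =>
    have h := hs.2.2.1 z (z ^ k) a
    rw [← pow_succ'] at h
    rw [h, (hc (z ^ k) z).symm, mul_inv_cancel_right, ih, ← pow_succ]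

lemma aux_pow_right' (hs : IsMulLieAlgebra star) (a z)
    (hc : ∀ w g, star a w * g = g * star a w) :
    ∀ k : ℕ, star a (z ^ k) = (star a z) ^ k := by
  intro k
  induction k with
  | zero => simpa using aux_star_one_right hs a
  | succ k ih =>
    have h := hs.2.1 a z (z ^ k)
    rw [← pow_succ'] at h
    rw [h, (hc (z ^ k) z).symm, mul_inv_cancel_right, ih, ← pow_succ']

end Aux

/-- for a prime `p` and `n ≥ 1` with `gcd(p, 2n) = 1`, every
multiplicative Lie algebra structure `⋆̃` on `G = ℤ_p × D_n` comes from a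
multiplicative Lie algebra structure `⋆` on `D_n` via
`(h,x) ⋆̃ (k,y) = (0, x ⋆ y)`. -/
theorem zmod_dihedral_n {p n : ℕ} (hp : p.Prime) (hn : 0 < n)
    (hcop : Nat.Coprime p (2 * n))
    (tstar : (Multiplicative (ZMod p) × DihedralGroup n) →
      (Multiplicative (ZMod p) × DihedralGroup n) →
      (Multiplicative (ZMod p) × DihedralGroup n))
    (htstar : IsMulLieAlgebra tstar) :
    ∃ star : DihedralGroup n → DihedralGroup n → DihedralGroup n,
      IsMulLieAlgebra star ∧
      ∀ (h k : Multiplicative (ZMod p)) (x y : DihedralGroup n),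
        tstar (h, x) (k, y) = (Multiplicative.ofAdd (0 : ZMod p), star x y) := by
  haveI : NeZero n := ⟨hn.ne'⟩
  haveI : NeZero p := ⟨hp.pos.ne'⟩
  -- basic torsion facts
  have hZp : ∀ v : Multiplicative (ZMod p), v ^ p = 1 := by
    intro v
    have : p • (Multiplicative.toAdd v) = 0 := by
      rw [nsmul_eq_mul, ZMod.natCast_self, zero_mul]
    rw [← ofAdd_toAdd v, ← ofAdd_nsmul, this, ofAdd_zero]
  have hD : ∀ d : DihedralGroup n, d ^ (2 * n) = 1 := by
    intro d
    have h : d ^ Fintype.card (DihedralGroup n) = 1 := pow_card_eq_one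
    rwa [DihedralGroup.card] at h
  have hd_one : ∀ d : DihedralGroup n, d ^ p = 1 → d = 1 := by
    intro d hdp
    have h1 : orderOf d ∣ p := orderOf_dvd_of_pow_eq_one hdp
    have h2 : orderOf d ∣ 2 * n := orderOf_dvd_of_pow_eq_one (hD d)
    have : orderOf d ∣ 1 := hcop ▸ Nat.dvd_gcd h1 h2
    exact orderOf_eq_one_iff.mp (Nat.dvd_one.mp this)
  have hg_one : ∀ g : Multiplicative (ZMod p) × DihedralGroup n, g ^ p = 1 → g ^ (2 * n) = 1 → g = 1 := by
    intro g h1 h2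
    have o1 : orderOf g ∣ p := orderOf_dvd_of_pow_eq_one h1
    have o2 : orderOf g ∣ 2 * n := orderOf_dvd_of_pow_eq_one h2
    have : orderOf g ∣ 1 := hcop ▸ Nat.dvd_gcd o1 o2
    exact orderOf_eq_one_iff.mp (Nat.dvd_one.mp this)
  -- elements with trivial dihedral part are central
  have hcen : ∀ g : Multiplicative (ZMod p) × DihedralGroup n, g.2 = 1 → ∀ w : Multiplicative (ZMod p) × DihedralGroup n, g * w = w * g := by
    intro g hg2 w
    ext
    · exact mul_comm g.1 w.1
    · show g.2 * w.2 = w.2 * g.2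
      rw [hg2, one_mul, mul_one]
  have hsnd : ∀ g : Multiplicative (ZMod p) × DihedralGroup n, g ^ p = 1 → g.2 = 1 := by
    intro g hgp
    apply hd_one
    have h2 : (g ^ p).2 = (1 : Multiplicative (ZMod p) × DihedralGroup n).2 := by rw [hgp]
    simpa using h2
  -- p-torsion of star values against a "ZMod" element on the left
  have hA : ∀ (h : Multiplicative (ZMod p)) (z : Multiplicative (ZMod p) × DihedralGroup n),
      (tstar ((h, 1)) z) ^ p = 1 := by
    intro h z
    have hc : ∀ w : Multiplicative (ZMod p) × DihedralGroup n, ((h, 1)) * w = w * (h, 1) := hcen (h, 1) rfl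
    have := aux_pow_left htstar ((h, 1)) z hc p
    have hpow : ((h, 1) : Multiplicative (ZMod p) × DihedralGroup n) ^ p = 1 := by
      ext
      · simpa using hZp h
      · simp
    rw [hpow, aux_star_one_left htstar] at this
    exact this.symm
  have hB : ∀ (z : Multiplicative (ZMod p) × DihedralGroup n) (h : Multiplicative (ZMod p)),
      (tstar z ((h, 1))) ^ p = 1 := by
    intro z h
    have hc : ∀ w : Multiplicative (ZMod p) × DihedralGroup n, ((h, 1)) * w = w * (h, 1) := hcen (h, 1) rfl
    have := aux_pow_right htstar z ((h, 1)) hc p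
    have hpow : ((h, 1) : Multiplicative (ZMod p) × DihedralGroup n) ^ p = 1 := by
      ext
      · simpa using hZp h
      · simp
    rw [hpow, aux_star_one_right htstar] at this
    exact this.symm
  -- vanishing of mixed brackets
  have hC : ∀ (x : DihedralGroup n) (k : Multiplicative (ZMod p)),
      tstar ((1, x)) ((k, 1)) = 1 := by
    intro x k
    apply hg_one _ (hB _ _)
    have hc : ∀ (w g : Multiplicative (ZMod p) × DihedralGroup n), tstar w ((k, 1)) * g = g * tstar w (k, 1) := by
      intro w g
      exact hcen _ (hsnd _ (hB w k)) g
    have := aux_pow_left' htstar ((1, x)) ((k, 1)) hc (2 * n)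
    have hpow : (((1 : Multiplicative (ZMod p)), x)) ^ (2 * n) = 1 := by
      ext
      · simp
      · simpa using hD x
    rw [hpow, aux_star_one_left htstar] at this
    exact this.symm
  have hDv : ∀ (h : Multiplicative (ZMod p)) (y : DihedralGroup n),
      tstar ((h, 1)) ((1, y)) = 1 := by
    intro h y
    apply hg_one _ (hA _ _)
    have hc : ∀ (w g : Multiplicative (ZMod p) × DihedralGroup n), tstar ((h, 1)) w * g = g * tstar (h, 1) w := by
      intro w g
      exact hcen _ (hsnd _ (hA h w)) g
    have := aux_pow_right' htstar ((h, 1)) ((1, y)) hc (2 * n)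
    have hpow : (((1 : Multiplicative (ZMod p)), y)) ^ (2 * n) = 1 := by
      ext
      · simp
      · simpa using hD y
    rw [hpow, aux_star_one_right htstar] at this
    exact this.symm
  -- vanishing of the ZMod-ZMod bracket
  have hE : ∀ (h k : Multiplicative (ZMod p)),
      tstar ((h, 1)) ((k, 1)) = 1 := by
    intro h k
    set g : Multiplicative (ZMod p) × DihedralGroup n := (Multiplicative.ofAdd (1 : ZMod p), 1) with hgdef
    have hgc : ∀ w : Multiplicative (ZMod p) × DihedralGroup n, g * w = w * g := hcen g rfl
    have hrep : ∀ v : Multiplicative (ZMod p),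
        ((v, 1)) = g ^ (Multiplicative.toAdd v).val := by
      intro v
      have : ((Multiplicative.toAdd v).val : ZMod p) = Multiplicative.toAdd v :=
        ZMod.natCast_rightInverse _
      ext
      · show v = (Multiplicative.ofAdd (1 : ZMod p)) ^ (Multiplicative.toAdd v).val
        rw [← ofAdd_nsmul, nsmul_eq_mul, mul_one, this, ofAdd_toAdd]
      · simp [hgdef]
    rw [hrep h, hrep k, aux_pow_left htstar g _ hgc,
      aux_pow_right htstar g g hgc, htstar.1 g, one_pow, one_pow]
  -- reduction to trivial ZMod components
  have hred : ∀ (h k : Multiplicative (ZMod p)) (x y : DihedralGroup n),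
      tstar ((h, x)) ((k, y)) = tstar ((1, x)) ((1, y)) := by
    intro h k x y
    have hdec : ((h, x)) = (h, 1) * (1, x) := by
      ext <;> simp
    have hdec' : ((k, y)) = (k, 1) * (1, y) := by
      ext <;> simp
    have hc : ∀ w : Multiplicative (ZMod p) × DihedralGroup n, ((h, 1)) * w = w * (h, 1) := hcen (h, 1) rfl
    have hc' : ∀ w : Multiplicative (ZMod p) × DihedralGroup n, ((k, 1)) * w = w * (k, 1) := hcen (k, 1) rfl
    have e1 := htstar.2.2.1 ((h, 1)) ((1, x)) ((k, y))
    rw [hc (tstar (1, x) (k, y)), mul_inv_cancel_right] at e1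
    have e2 := htstar.2.1 ((1, x)) ((k, 1)) ((1, y))
    rw [hc' (tstar (1, x) (1, y)), mul_inv_cancel_right] at e2
    have e3 := htstar.2.1 ((h, 1)) ((k, 1)) ((1, y))
    rw [hc' (tstar (h, 1) (1, y)), mul_inv_cancel_right] at e3
    rw [hdec, e1, hdec', e2, e3, hC, hDv, hE]
    simp
  -- the first component vanishes
  have hfst : ∀ x y : DihedralGroup n,
      (tstar ((1, x)) ((1, y))).1 = 1 := by
    intro x y
    have hiter : ∀ k : ℕ,
        (tstar ((1, x)) (((1, y)) ^ k)).1
          = (tstar ((1, x)) ((1, y))).1 ^ k := by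
      intro k
      induction k with
      | zero => simp [aux_star_one_right htstar]
      | succ k ih =>
        have h := htstar.2.1 ((1, x)) ((1, y)) (((1, y)) ^ k)
        rw [← pow_succ'] at h
        have := congrArg Prod.fst h
        simp only [Prod.fst_mul, Prod.fst_inv] at this
        rw [this, ih]
        simp [pow_succ', mul_comm, mul_left_comm, mul_assoc]
    have h2n := hiter (2 * n)
    have hpow : (((1 : Multiplicative (ZMod p)), y)) ^ (2 * n) = 1 := by
      ext
      · simp
      · simpa using hD y
    rw [hpow, aux_star_one_right htstar] at h2n
    have e1 : (tstar ((1, x)) ((1, y))).1 ^ (2 * n) = 1 := by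
      simpa using h2n.symm
    have e2 : (tstar ((1, x)) ((1, y))).1 ^ p = 1 := hZp _
    have o1 : orderOf (tstar ((1, x)) ((1, y))).1 ∣ 1 :=
      hcop ▸ Nat.dvd_gcd (orderOf_dvd_of_pow_eq_one e2)
        (orderOf_dvd_of_pow_eq_one e1)
    exact orderOf_eq_one_iff.mp (Nat.dvd_one.mp o1)
  -- define the induced bracket
  refine ⟨fun x y => (tstar ((1, x)) ((1, y))).2, ?_, ?_⟩
  · constructor
    · intro x
      have := congrArg Prod.snd (htstar.1 ((1, x)))
      simpa using this
    constructor
    · intro x y z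
      have h := htstar.2.1 ((1, x)) ((1, y)) ((1, z))
      have := congrArg Prod.snd h
      simpa using this
    constructor
    · intro x y z
      have h := htstar.2.2.1 ((1, x)) ((1, y)) ((1, z))
      have := congrArg Prod.snd h
      simpa using this
    constructor
    · intro x y z
      have key : ∀ a b : DihedralGroup n,
          tstar ((1, a)) ((1, b))
            = ((1 : Multiplicative (ZMod p)), (tstar ((1, a)) ((1, b))).2) := by
        intro a b
        ext
        · exact hfst a b
        · rfl
      have h := htstar.2.2.2.1 ((1, x)) ((1, y)) ((1, z))
      rw [key x y, key y z, key z x] at h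
      have := congrArg Prod.snd h
      simpa using this
    · intro x y z
      have h := htstar.2.2.2.2 ((1, x)) ((1, y)) ((1, z))
      have := congrArg Prod.snd h
      simpa using this
  · intro h k x y
    rw [hred h k x y]
    ext
    · simpa using hfst x y
    · rfl
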